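/- Let f be a polynomial in R[x_1,...,x_n] that is a sum of squares, let A be a nonzero vector of nonnegative integers, and for each square summand g_i in a representation f = Σ g_i^2, let g_{i,w} denote the A-lowest homogeneous part of g_i with respect to common minimal A-weight w = min_i min{A·α : α ∈ supp g_i}. Then the A-lowest part of f equals Σ_i g_{i,w}^2. -/

import Mathlib

open MvPolynomial

/-- The `A`-weight of an exponent vector. -/
def wtA {n : ℕ} (A : Fin n → ℕ) (α : Fin n →₀ ℕ) : ℕ := ∑ i, A i * α i

/-- The part of `f` consisting of terms of `A`-weight exactly `v`. -/
noncomputable def weightPart {n : ℕ} (A : Fin n → ℕ) (v : ℕ) (f : MvPolynomial (Fin n) ℝ) :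
    MvPolynomial (Fin n) ℝ :=
  ∑ α ∈ f.support.filter (fun α => wtA A α = v), monomial α (coeff α f)

lemma wtA_add {n : ℕ} (A : Fin n → ℕ) (α β : Fin n →₀ ℕ) :
    wtA A (α + β) = wtA A α + wtA A β := by
  simp [wtA, Finsupp.add_apply, mul_add, Finset.sum_add_distrib]

lemma coeff_weightPart {n : ℕ} (A : Fin n → ℕ) (v : ℕ) (h : MvPolynomial (Fin n) ℝ)
    (α : Fin n →₀ ℕ) :
    coeff α (weightPart A v h) = if wtA A α = v then coeff α h else 0 := by
  classical
  rw [weightPart, MvPolynomial.coeff_sum]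
  simp only [coeff_monomial]
  rw [Finset.sum_ite_eq' (h.support.filter (fun α => wtA A α = v)) α (fun β => coeff β h)]
  by_cases hm : α ∈ h.support.filter (fun α => wtA A α = v)
  · rw [if_pos hm]
    rw [Finset.mem_filter] at hm
    rw [if_pos hm.2]
  · rw [if_neg hm]
    rw [Finset.mem_filter] at hm
    by_cases hwt : wtA A α = v
    · rw [if_pos hwt]
      by_cases hs : α ∈ h.support
      · exact absurd ⟨hs, hwt⟩ hm
      · exact (MvPolynomial.notMem_support_iff.mp hs).symm
    · rw [if_neg hwt]

/-- Coefficient at a weight-`2w` exponent of the square of a polynomial whose support has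
weights `≥ w` equals the corresponding coefficient of the square of its weight-`w` part. -/
lemma coeff_sq_low {n : ℕ} (A : Fin n → ℕ) (w : ℕ) (h : MvPolynomial (Fin n) ℝ)
    (hlb : ∀ α ∈ h.support, w ≤ wtA A α) (α : Fin n →₀ ℕ) (hα : wtA A α = 2 * w) :
    coeff α (h ^ 2) = coeff α ((weightPart A w h) ^ 2) := by
  classical
  rw [sq, sq, MvPolynomial.coeff_mul, MvPolynomial.coeff_mul]
  apply Finset.sum_congr rfl
  intro p hp
  rw [Finset.HasAntidiagonal.mem_antidiagonal] at hp
  have hsum : wtA A p.1 + wtA A p.2 = 2 * w := by rw [← wtA_add, hp, hα]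
  rw [coeff_weightPart, coeff_weightPart]
  by_cases h1 : wtA A p.1 = w
  · have h2 : wtA A p.2 = w := by omega
    rw [if_pos h1, if_pos h2]
  · rw [if_neg h1, zero_mul]
    by_cases hc1 : coeff p.1 h = 0
    · rw [hc1, zero_mul]
    · have hmem : p.1 ∈ h.support := MvPolynomial.mem_support_iff.mpr hc1
      have h1' : w < wtA A p.1 := lt_of_le_of_ne (hlb _ hmem) (Ne.symm h1)
      have h2' : wtA A p.2 < w := by omega
      have : p.2 ∉ h.support := fun hmem2 => absurd (hlb _ hmem2) (not_le.mpr h2')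
      rw [MvPolynomial.notMem_support_iff.mp this, mul_zero]

/-- Every exponent in the support of the square of the weight-`w` part has weight `2w`. -/
lemma support_sq_weightPart {n : ℕ} (A : Fin n → ℕ) (w : ℕ) (h : MvPolynomial (Fin n) ℝ)
    (α : Fin n →₀ ℕ) (hα : coeff α ((weightPart A w h) ^ 2) ≠ 0) : wtA A α = 2 * w := by
  classical
  rw [sq, MvPolynomial.coeff_mul] at hα
  obtain ⟨p, hp, hne⟩ := Finset.exists_ne_zero_of_sum_ne_zero hα
  rw [Finset.HasAntidiagonal.mem_antidiagonal] at hp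
  rw [coeff_weightPart, coeff_weightPart] at hne
  by_cases h1 : wtA A p.1 = w
  · by_cases h2 : wtA A p.2 = w
    · rw [← hp, wtA_add, h1, h2]; ring
    · rw [if_neg h2, mul_zero] at hne; exact absurd rfl hne
  · rw [if_neg h1, zero_mul] at hne; exact absurd rfl hne

/-- A nontrivial sum of squares of real polynomials is nonzero. -/
lemma sum_sq_ne_zero {n : ℕ} (s : Finset ℕ) (L : ℕ → MvPolynomial (Fin n) ℝ)
    (i₀ : ℕ) (hi₀ : i₀ ∈ s) (hL : L i₀ ≠ 0) : (∑ i ∈ s, (L i) ^ 2) ≠ 0 := by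
  intro hzero
  apply hL
  apply MvPolynomial.funext
  intro x
  have hx : ∑ i ∈ s, (MvPolynomial.eval x (L i)) ^ 2 = 0 := by
    have := congrArg (MvPolynomial.eval x) hzero
    simpa using this
  have := (Finset.sum_eq_zero_iff_of_nonneg (fun i _ => sq_nonneg (MvPolynomial.eval x (L i)))).mp
    hx i₀ hi₀
  have h0 : MvPolynomial.eval x (L i₀) = 0 := by nlinarith [this]
  simp [h0]

/-- If `f = Σ_{i ∈ s} gᵢ²` is nonzero, `A` a nonzero weight vector, `w` the common minimal
`A`-weight over the supports of the `gᵢ` and `v` the minimal `A`-weight of the support of `f`,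
then the `A`-lowest part of `f` equals `Σ_i g_{i,w}²`. -/
theorem lowest_part_eq_sum_sq_lowest_parts (n : ℕ) (f : MvPolynomial (Fin n) ℝ) (hf : f ≠ 0)
    (s : Finset ℕ) (g : ℕ → MvPolynomial (Fin n) ℝ) (hrep : f = ∑ i ∈ s, g i ^ 2)
    (A : Fin n → ℕ) (hA : A ≠ 0) (w : ℕ)
    (hw : IsLeast {w' | ∃ i ∈ s, ∃ α ∈ (g i).support, wtA A α = w'} w)
    (v : ℕ) (hv : IsLeast {v' | ∃ α ∈ f.support, wtA A α = v'} v) :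
    weightPart A v f = ∑ i ∈ s, (weightPart A w (g i)) ^ 2 := by
  classical
  -- lower bound on supports of gᵢ
  have hlb : ∀ i ∈ s, ∀ α ∈ (g i).support, w ≤ wtA A α := by
    intro i hi α hα
    exact hw.2 ⟨i, hi, α, hα, rfl⟩
  set S := ∑ i ∈ s, (weightPart A w (g i)) ^ 2 with hS
  -- coefficients of f at weight 2w exponents agree with S
  have hkey : ∀ α : Fin n →₀ ℕ, wtA A α = 2 * w → coeff α f = coeff α S := by
    intro α hα
    rw [hrep, hS, MvPolynomial.coeff_sum, MvPolynomial.coeff_sum]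
    exact Finset.sum_congr rfl fun i hi => coeff_sq_low A w (g i) (hlb i hi) α hα
  -- S is nonzero
  obtain ⟨i₀, hi₀, α₀, hα₀, hwα₀⟩ := hw.1
  have hLne : weightPart A w (g i₀) ≠ 0 := by
    intro h0
    have := coeff_weightPart A w (g i₀) α₀
    rw [h0, if_pos hwα₀] at this
    exact MvPolynomial.mem_support_iff.mp hα₀ this.symm
  have hSne : S ≠ 0 := sum_sq_ne_zero s (fun i => weightPart A w (g i)) i₀ hi₀ hLne
  -- support of S is contained in weight 2w
  have hSsupp : ∀ α : Fin n →₀ ℕ, coeff α S ≠ 0 → wtA A α = 2 * w := by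
    intro α hα
    rw [hS, MvPolynomial.coeff_sum] at hα
    obtain ⟨i, hi, hne⟩ := Finset.exists_ne_zero_of_sum_ne_zero hα
    exact support_sq_weightPart A w (g i) α hne
  -- every exponent in support of f has weight ≥ 2w
  have hflb : ∀ α ∈ f.support, 2 * w ≤ wtA A α := by
    intro α hα
    rw [MvPolynomial.mem_support_iff, hrep, MvPolynomial.coeff_sum] at hα
    obtain ⟨i, hi, hne⟩ := Finset.exists_ne_zero_of_sum_ne_zero hα
    rw [sq, MvPolynomial.coeff_mul] at hne
    obtain ⟨p, hp, hpne⟩ := Finset.exists_ne_zero_of_sum_ne_zero hne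
    rw [Finset.HasAntidiagonal.mem_antidiagonal] at hp
    have h1 : coeff p.1 (g i) ≠ 0 := fun h => hpne (by rw [h, zero_mul])
    have h2 : coeff p.2 (g i) ≠ 0 := fun h => hpne (by rw [h, mul_zero])
    have w1 := hlb i hi p.1 (MvPolynomial.mem_support_iff.mpr h1)
    have w2 := hlb i hi p.2 (MvPolynomial.mem_support_iff.mpr h2)
    rw [← hp, wtA_add]
    omega
  -- v = 2w
  have hv2w : v = 2 * w := by
    obtain ⟨α₁, hα₁, hwα₁⟩ := hv.1
    have h1 : 2 * w ≤ v := hwα₁ ▸ hflb α₁ hα₁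
    obtain ⟨α₂, hα₂⟩ := MvPolynomial.ne_zero_iff.mp hSne
    have hwα₂ : wtA A α₂ = 2 * w := hSsupp α₂ hα₂
    have hα₂f : α₂ ∈ f.support :=
      MvPolynomial.mem_support_iff.mpr (by rw [hkey α₂ hwα₂]; exact hα₂)
    have h2 : v ≤ 2 * w := hwα₂ ▸ hv.2 ⟨α₂, hα₂f, rfl⟩
    omega
  -- conclude by comparing coefficients
  ext α
  rw [coeff_weightPart, hv2w]
  by_cases hα : wtA A α = 2 * w
  · rw [if_pos hα]
    exact hkey α hα
  · rw [if_neg hα]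
    by_contra hc
    exact hα (hSsupp α fun h => hc h.symm)
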